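/- There are infinitely many functional unit degrees below ⟨{decr,iszero},Counter⟩: the set of ≡-equivalence classes D of functional units for ℕ such that some H' ∈ D satisfies H' ≤ ⟨{decr,iszero},Counter⟩ is infinite. -/
import Mathlib


/-- Primitive instructions: plain basic `f.m`, positive test `+f.m`, negative test `-f.m`
(method names are natural numbers, there is a single focus `f`), forward jump `#l`,
backward jump `\l`, and the positive/negative termination instructions `!t` / `!f`. -/
inductive Instr : Type where
  | basic (m : ℕ)
  | postest (m : ℕ)
  | negtest (m : ℕ)
  | fjump (l : ℕ)
  | bjump (l : ℕ)
  | haltT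
  | haltF
deriving DecidableEq

/-- A functional unit for a state space `S`: a finite, functional set of
(method name, method operation) pairs, where a method operation is a total
function `S → Bool × S`. -/
structure FU (S : Type*) where
  carrier : Set (ℕ × (S → Bool × S))
  finite : carrier.Finite
  functional : ∀ {m : ℕ} {M M' : S → Bool × S},
    (m, M) ∈ carrier → (m, M') ∈ carrier → M = M'

/-- The interface of a functional unit: the set of method names occurring in it. -/
def FU.iface {S : Type*} (H : FU S) : Set ℕ := {m | ∃ M, (m, M) ∈ H.carrier}

/-- The method operation named `m` in `H` (an arbitrary fixed value if `m ∉ I(H)`). -/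
noncomputable def FU.op {S : Type*} (H : FU S) (m : ℕ) (s : S) : Bool × S :=
  letI := Classical.propDecidable
  if h : ∃ M, (m, M) ∈ H.carrier then h.choose s else (true, s)

/-- The restriction `⟨I, H⟩` of a functional unit to a set `I` of method names. -/
def FU.restrict {S : Type*} (H : FU S) (I : Set ℕ) : FU S where
  carrier := {p ∈ H.carrier | p.1 ∈ I}
  finite := H.finite.subset (Set.sep_subset _ _)
  functional := fun hM hM' => H.functional hM.1 hM'.1

/-- The method names used by an instruction all belong to `I`. -/
def Instr.namesIn (I : Set ℕ) : Instr → Prop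
  | .basic m => m ∈ I
  | .postest m => m ∈ I
  | .negtest m => m ∈ I
  | _ => True

/-- An instruction sequence over a set `I` of method names: a finite nonempty list of
primitive instructions whose method names belong to `I`. -/
def InstrSeqOver (I : Set ℕ) (x : List Instr) : Prop :=
  x ≠ [] ∧ ∀ u ∈ x, u.namesIn I

/-- `Exec H x i s b s'` : execution of the instruction sequence `x` on the functional
unit `H`, from (0-based) position `i` in state `s`, terminates delivering the Boolean
value `b` with final state `s'`.  (Position `i` here corresponds to the 1-based
position `i+1`; positions outside the sequence, jumps `#0`/`\0`, and infinite
executions admit no derivation, i.e. execution does not terminate.) -/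
inductive Exec {S : Type*} (H : FU S) (x : List Instr) : ℕ → S → Bool → S → Prop where
  | basic {i : ℕ} {s : S} {b : Bool} {s' : S} (m : ℕ)
      (hu : x[i]? = some (Instr.basic m))
      (h : Exec H x (i + 1) (H.op m s).2 b s') : Exec H x i s b s'
  | posT {i : ℕ} {s : S} {b : Bool} {s' : S} (m : ℕ)
      (hu : x[i]? = some (Instr.postest m)) (hr : (H.op m s).1 = true)
      (h : Exec H x (i + 1) (H.op m s).2 b s') : Exec H x i s b s'
  | posF {i : ℕ} {s : S} {b : Bool} {s' : S} (m : ℕ)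
      (hu : x[i]? = some (Instr.postest m)) (hr : (H.op m s).1 = false)
      (h : Exec H x (i + 2) (H.op m s).2 b s') : Exec H x i s b s'
  | negT {i : ℕ} {s : S} {b : Bool} {s' : S} (m : ℕ)
      (hu : x[i]? = some (Instr.negtest m)) (hr : (H.op m s).1 = true)
      (h : Exec H x (i + 2) (H.op m s).2 b s') : Exec H x i s b s'
  | negF {i : ℕ} {s : S} {b : Bool} {s' : S} (m : ℕ)
      (hu : x[i]? = some (Instr.negtest m)) (hr : (H.op m s).1 = false)
      (h : Exec H x (i + 1) (H.op m s).2 b s') : Exec H x i s b s'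
  | fjump {i : ℕ} {s : S} {b : Bool} {s' : S} (l : ℕ)
      (hu : x[i]? = some (Instr.fjump l))
      (h : Exec H x (i + l) s b s') : Exec H x i s b s'
  | bjump {i : ℕ} {s : S} {b : Bool} {s' : S} (l : ℕ)
      (hu : x[i]? = some (Instr.bjump l)) (hl : l ≤ i)
      (h : Exec H x (i - l) s b s') : Exec H x i s b s'
  | haltT {i : ℕ} {s : S} (hu : x[i]? = some Instr.haltT) : Exec H x i s true s
  | haltF {i : ℕ} {s : S} (hu : x[i]? = some Instr.haltF) : Exec H x i s false s

/-- `M` is a derived method operation of `H`: there is an instruction sequence `x`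
over `I(H)` whose produced partial method operation `⌈x⌉_H` is total and equals `M`. -/
def DerivedOp {S : Type*} (H : FU S) (M : S → Bool × S) : Prop :=
  ∃ x : List Instr, InstrSeqOver H.iface x ∧ ∀ s, Exec H x 0 s (M s).1 (M s).2

/-- `H ≤ H'` : every method operation of `H` is a derived method operation of `H'`. -/
def FU.le {S : Type*} (H H' : FU S) : Prop :=
  ∀ m M, (m, M) ∈ H.carrier → DerivedOp H' M

/-- `H ≡ H'` : `H ≤ H'` and `H' ≤ H`. -/
def FU.equiv {S : Type*} (H H' : FU S) : Prop := FU.le H H' ∧ FU.le H' H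

/-- A method operation on ℕ is computable if both its components are. -/
def ComputableMO (M : ℕ → Bool × ℕ) : Prop :=
  Computable (fun n => (M n).1) ∧ Computable (fun n => (M n).2)

/-- A functional unit for ℕ is computable if all its method operations are. -/
def ComputableFU (H : FU ℕ) : Prop :=
  ∀ m M, (m, M) ∈ H.carrier → ComputableMO M

/-- Setzero(x) = (true, 0). -/
def Setzero : ℕ → Bool × ℕ := fun _ => (true, 0)

/-- Incr(x) = (true, x+1). -/
def Incr : ℕ → Bool × ℕ := fun x => (true, x + 1)

/-- Decr(x) = (true, x−1) for x > 0, Decr(0) = (false, 0). -/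
def Decr : ℕ → Bool × ℕ := fun x => if x = 0 then (false, 0) else (true, x - 1)

/-- Iszero(x) = (true, x) for x = 0, (false, x) for x > 0. -/
def Iszero : ℕ → Bool × ℕ := fun x => if x = 0 then (true, x) else (false, x)

/-- The unbounded counter functional unit, with method names
setzero = 0, incr = 1, decr = 2, iszero = 3. -/
def Counter : FU ℕ where
  carrier := {(0, Setzero), (1, Incr), (2, Decr), (3, Iszero)}
  finite := (((Set.finite_singleton _).insert _).insert _).insert _
  functional := by
    rintro m M M' hM hM'
    simp only [Set.mem_insert_iff, Set.mem_singleton_iff, Prod.mk.injEq] at hM hM'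
    rcases hM with ⟨rfl, rfl⟩ | ⟨rfl, rfl⟩ | ⟨rfl, rfl⟩ | ⟨rfl, rfl⟩ <;>
      rcases hM' with ⟨h, rfl⟩ | ⟨h, rfl⟩ | ⟨h, rfl⟩ | ⟨h, rfl⟩ <;>
        first | rfl | simp at h

/-! ### Auxiliary development -/

lemma FU.op_eq {S : Type*} {H : FU S} {m : ℕ} {M : S → Bool × S}
    (h : (m, M) ∈ H.carrier) : H.op m = M := by
  funext s
  have hex : ∃ M', (m, M') ∈ H.carrier := ⟨M, h⟩
  show (letI := Classical.propDecidable; if h : ∃ M, (m, M) ∈ H.carrier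
      then h.choose s else (true, s)) = M s
  rw [dif_pos hex]
  exact congrFun (H.functional hex.choose_spec h) s

/-- subtract-`n` method operation. -/
def Pn (n : ℕ) : ℕ → Bool × ℕ := fun s => (true, s - n)

/-- Functional unit with a single method (named 0) subtracting `n`. -/
def U (n : ℕ) : FU ℕ where
  carrier := {(0, Pn n)}
  finite := Set.finite_singleton _
  functional := by
    rintro m M M' hM hM'
    simp only [Set.mem_singleton_iff, Prod.mk.injEq] at hM hM'
    rw [hM.2, hM'.2]

lemma U_mem (n : ℕ) : ((0 : ℕ), Pn n) ∈ (U n).carrier := rfl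

lemma U_iface (n : ℕ) : (U n).iface = {0} := by
  ext m
  constructor
  · rintro ⟨M, hM⟩
    simp only [U, Set.mem_singleton_iff, Prod.mk.injEq] at hM
    simp [hM.1]
  · rintro rfl
    exact ⟨Pn n, U_mem n⟩

lemma U_op (n : ℕ) : (U n).op 0 = Pn n := FU.op_eq (U_mem n)

/-- Determinism of execution. -/
lemma exec_det {S : Type*} {H : FU S} {x : List Instr} {i : ℕ} {s : S} {b : Bool} {s' : S}
    (h1 : Exec H x i s b s') :
    ∀ b'' s'', Exec H x i s b'' s'' → b = b'' ∧ s' = s'' := by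
  induction h1 with
  | basic m hu h ih =>
    intro b'' s'' h2
    cases h2 <;>
      simp only [hu, Option.some.injEq, Instr.basic.injEq, Instr.postest.injEq,
        Instr.negtest.injEq, Instr.fjump.injEq, Instr.bjump.injEq, reduceCtorEq] at * <;>
      subst_vars <;>
      first
        | exact ih _ _ ‹_›
        | simp_all
  | posT m hu hr h ih =>
    intro b'' s'' h2
    cases h2 <;>
      simp only [hu, Option.some.injEq, Instr.basic.injEq, Instr.postest.injEq,
        Instr.negtest.injEq, Instr.fjump.injEq, Instr.bjump.injEq, reduceCtorEq] at * <;>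
      subst_vars <;>
      first
        | exact ih _ _ ‹_›
        | simp_all
  | posF m hu hr h ih =>
    intro b'' s'' h2
    cases h2 <;>
      simp only [hu, Option.some.injEq, Instr.basic.injEq, Instr.postest.injEq,
        Instr.negtest.injEq, Instr.fjump.injEq, Instr.bjump.injEq, reduceCtorEq] at * <;>
      subst_vars <;>
      first
        | exact ih _ _ ‹_›
        | simp_all
  | negT m hu hr h ih =>
    intro b'' s'' h2
    cases h2 <;>
      simp only [hu, Option.some.injEq, Instr.basic.injEq, Instr.postest.injEq,
        Instr.negtest.injEq, Instr.fjump.injEq, Instr.bjump.injEq, reduceCtorEq] at * <;>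
      subst_vars <;>
      first
        | exact ih _ _ ‹_›
        | simp_all
  | negF m hu hr h ih =>
    intro b'' s'' h2
    cases h2 <;>
      simp only [hu, Option.some.injEq, Instr.basic.injEq, Instr.postest.injEq,
        Instr.negtest.injEq, Instr.fjump.injEq, Instr.bjump.injEq, reduceCtorEq] at * <;>
      subst_vars <;>
      first
        | exact ih _ _ ‹_›
        | simp_all
  | fjump l hu h ih =>
    intro b'' s'' h2
    cases h2 <;>
      simp only [hu, Option.some.injEq, Instr.basic.injEq, Instr.postest.injEq,
        Instr.negtest.injEq, Instr.fjump.injEq, Instr.bjump.injEq, reduceCtorEq] at * <;>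
      subst_vars <;>
      first
        | exact ih _ _ ‹_›
        | simp_all
  | bjump l hu hl h ih =>
    intro b'' s'' h2
    cases h2 <;>
      simp only [hu, Option.some.injEq, Instr.basic.injEq, Instr.postest.injEq,
        Instr.negtest.injEq, Instr.fjump.injEq, Instr.bjump.injEq, reduceCtorEq] at * <;>
      subst_vars <;>
      first
        | exact ih _ _ ‹_›
        | simp_all
  | haltT hu => intro b'' s'' h2; cases h2 <;> simp_all
  | haltF hu => intro b'' s'' h2; cases h2 <;> simp_all

/-- Structure of executions over `U b`: replies are all true, the path is state-independent,
so the result is subtraction of a fixed multiple of `b`. -/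
lemma exec_struct {b : ℕ} {x : List Instr} (hx : ∀ u ∈ x, u.namesIn (U b).iface)
    {i : ℕ} {s : ℕ} {bo : Bool} {s' : ℕ} (h : Exec (U b) x i s bo s') :
    ∃ k, s' = s - k * b ∧ ∀ t, Exec (U b) x i t bo (t - k * b) := by
  induction h with
  | @basic i s bo s' m hu h ih =>
    have hmem : Instr.basic m ∈ x := by
      obtain ⟨hlt, he⟩ := List.getElem?_eq_some_iff.1 hu
      exact he ▸ List.getElem_mem hlt
    have hm0 : m = 0 := by
      have := hx _ hmem
      rw [U_iface] at this
      simpa [Instr.namesIn] using this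
    subst hm0
    obtain ⟨k, hk, hall⟩ := ih
    rw [U_op] at hk
    refine ⟨k + 1, ?_, ?_⟩
    · have e : (k + 1) * b = k * b + b := Nat.succ_mul k b
      rw [e]
      simp only [Pn] at hk
      generalize k * b = K at hk ⊢
      omega
    · intro t
      refine Exec.basic 0 hu ?_
      have h2 := hall (t - b)
      have e : t - b - k * b = t - (k + 1) * b := by
        rw [Nat.succ_mul]; generalize k * b = K; omega
      rw [e] at h2
      have e2 : ((U b).op 0 t).2 = t - b := by rw [U_op]; rfl
      rw [e2]; exact h2
  | @posT i s bo s' m hu hr h ih =>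
    have hmem : Instr.postest m ∈ x := by
      obtain ⟨hlt, he⟩ := List.getElem?_eq_some_iff.1 hu
      exact he ▸ List.getElem_mem hlt
    have hm0 : m = 0 := by
      have := hx _ hmem
      rw [U_iface] at this
      simpa [Instr.namesIn] using this
    subst hm0
    obtain ⟨k, hk, hall⟩ := ih
    rw [U_op] at hk
    refine ⟨k + 1, ?_, ?_⟩
    · have e : (k + 1) * b = k * b + b := Nat.succ_mul k b
      rw [e]
      simp only [Pn] at hk
      generalize k * b = K at hk ⊢
      omega
    · intro t
      refine Exec.posT 0 hu (by simp [U_op, Pn]) ?_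
      have h2 := hall (t - b)
      have e : t - b - k * b = t - (k + 1) * b := by
        rw [Nat.succ_mul]; generalize k * b = K; omega
      rw [e] at h2
      have e2 : ((U b).op 0 t).2 = t - b := by rw [U_op]; rfl
      rw [e2]; exact h2
  | @posF i s bo s' m hu hr h ih =>
    have hmem : Instr.postest m ∈ x := by
      obtain ⟨hlt, he⟩ := List.getElem?_eq_some_iff.1 hu
      exact he ▸ List.getElem_mem hlt
    have hm0 : m = 0 := by
      have := hx _ hmem
      rw [U_iface] at this
      simpa [Instr.namesIn] using this
    subst hm0
    rw [U_op] at hr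
    simp [Pn] at hr
  | @negT i s bo s' m hu hr h ih =>
    have hmem : Instr.negtest m ∈ x := by
      obtain ⟨hlt, he⟩ := List.getElem?_eq_some_iff.1 hu
      exact he ▸ List.getElem_mem hlt
    have hm0 : m = 0 := by
      have := hx _ hmem
      rw [U_iface] at this
      simpa [Instr.namesIn] using this
    subst hm0
    obtain ⟨k, hk, hall⟩ := ih
    rw [U_op] at hk
    refine ⟨k + 1, ?_, ?_⟩
    · have e : (k + 1) * b = k * b + b := Nat.succ_mul k b
      rw [e]
      simp only [Pn] at hk
      generalize k * b = K at hk ⊢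
      omega
    · intro t
      refine Exec.negT 0 hu (by simp [U_op, Pn]) ?_
      have h2 := hall (t - b)
      have e : t - b - k * b = t - (k + 1) * b := by
        rw [Nat.succ_mul]; generalize k * b = K; omega
      rw [e] at h2
      have e2 : ((U b).op 0 t).2 = t - b := by rw [U_op]; rfl
      rw [e2]; exact h2
  | @negF i s bo s' m hu hr h ih =>
    have hmem : Instr.negtest m ∈ x := by
      obtain ⟨hlt, he⟩ := List.getElem?_eq_some_iff.1 hu
      exact he ▸ List.getElem_mem hlt
    have hm0 : m = 0 := by
      have := hx _ hmem
      rw [U_iface] at this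
      simpa [Instr.namesIn] using this
    subst hm0
    rw [U_op] at hr
    simp [Pn] at hr
  | @fjump i s bo s' l hu h ih =>
    obtain ⟨k, hk, hall⟩ := ih
    exact ⟨k, hk, fun t => Exec.fjump l hu (hall t)⟩
  | @bjump i s bo s' l hu hl h ih =>
    obtain ⟨k, hk, hall⟩ := ih
    exact ⟨k, hk, fun t => Exec.bjump l hu hl (hall t)⟩
  | @haltT i s hu =>
    exact ⟨0, by simp, fun t => by simpa using Exec.haltT hu⟩
  | @haltF i s hu =>
    exact ⟨0, by simp, fun t => by simpa using Exec.haltF hu⟩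

/-- If every op of `U a` is derivable in `U b`, then `b ∣ a`. -/
lemma U_le_dvd {a b : ℕ} (h : FU.le (U a) (U b)) : b ∣ a := by
  obtain ⟨x, hx, hexec⟩ := h 0 (Pn a) (U_mem a)
  have h0 := hexec 0
  obtain ⟨k, -, hall⟩ := exec_struct hx.2 h0
  have h1 := hall (a + k * b)
  have h2 := hexec (a + k * b)
  simp only [Pn] at h1 h2
  obtain ⟨-, he⟩ := exec_det h1 _ _ h2
  refine ⟨k, ?_⟩
  generalize hK : k * b = K at he ⊢
  rw [mul_comm] at hK
  omega

/-- `U n` is below itself (reflexivity witness). -/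
lemma U_le_self (n : ℕ) : FU.le (U n) (U n) := by
  intro m M hM
  simp only [U, Set.mem_singleton_iff, Prod.mk.injEq] at hM
  obtain ⟨rfl, rfl⟩ := hM
  refine ⟨[Instr.basic 0, Instr.haltT], ⟨by simp, ?_⟩, ?_⟩
  · intro u hu
    simp only [List.mem_cons, List.not_mem_nil, or_false] at hu
    rcases hu with rfl | rfl
    · rw [U_iface]; simp [Instr.namesIn]
    · trivial
  · intro s
    refine Exec.basic 0 rfl ?_
    have : ((U n).op 0 s).2 = (Pn n s).2 := by rw [U_op]
    rw [this]
    exact Exec.haltT rfl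

lemma U_equiv_self (n : ℕ) : FU.equiv (U n) (U n) := ⟨U_le_self n, U_le_self n⟩

/-- The restricted counter. -/
noncomputable abbrev RC : FU ℕ := Counter.restrict {2, 3}

lemma RC_decr_mem : ((2 : ℕ), Decr) ∈ RC.carrier := by
  constructor
  · simp [Counter]
  · simp

lemma RC_op2 : RC.op 2 = Decr := FU.op_eq RC_decr_mem

/-- The program `f.decr^n ; !t`. -/
def prog (n : ℕ) : List Instr := List.replicate n (Instr.basic 2) ++ [Instr.haltT]

lemma prog_run (n : ℕ) : ∀ a, a ≤ n → ∀ s, Exec RC (prog n) (n - a) s true (s - a) := by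
  intro a
  induction a with
  | zero =>
    intro _ s
    have hu : (prog n)[n]? = some Instr.haltT := by
      simp [prog, List.getElem?_append_right, List.length_replicate]
    simpa using Exec.haltT hu
  | succ a ih =>
    intro hle s
    have hlt : n - (a + 1) < n := by omega
    have hu : (prog n)[n - (a + 1)]? = some (Instr.basic 2) := by
      rw [prog, List.getElem?_append_left (by simpa using hlt)]
      simp [List.getElem?_replicate, hlt]
    refine Exec.basic 2 hu ?_
    have e1 : n - (a + 1) + 1 = n - a := by omega
    have e2 : (RC.op 2 s).2 = s - 1 := by
      rw [RC_op2]
      simp only [Decr]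
      split <;> omega
    rw [e1, e2]
    have := ih (by omega) (s - 1)
    have e3 : s - 1 - a = s - (a + 1) := by omega
    rwa [e3] at this

lemma two_mem_RC_iface : (2 : ℕ) ∈ RC.iface := ⟨Decr, RC_decr_mem⟩

/-- `U n ≤ ⟨{decr, iszero}, Counter⟩`. -/
lemma U_le_RC (n : ℕ) : FU.le (U n) RC := by
  intro m M hM
  simp only [U, Set.mem_singleton_iff, Prod.mk.injEq] at hM
  obtain ⟨rfl, rfl⟩ := hM
  refine ⟨prog n, ⟨by simp [prog], ?_⟩, ?_⟩
  · intro u hu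
    rw [prog, List.mem_append] at hu
    rcases hu with hu | hu
    · rw [List.eq_of_mem_replicate hu]
      exact two_mem_RC_iface
    · simp at hu
      rw [hu]
      trivial
  · intro s
    have := prog_run n n le_rfl s
    simpa [Pn] using this

/-- There are infinitely many functional unit degrees (≡-equivalence classes) below
`⟨{decr, iszero}, Counter⟩`. -/
theorem infinitely_many_degrees_below :
    {D : Set (FU ℕ) | (∃ H : FU ℕ, D = {H' | FU.equiv H' H}) ∧
      ∃ H' ∈ D, FU.le H' (Counter.restrict {2, 3})}.Infinite := by
  apply Set.infinite_of_injective_forall_mem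
    (f := fun n : ℕ => {H' | FU.equiv H' (U (n + 1))})
  · intro n m hnm
    simp only at hnm
    have h1 : U (n + 1) ∈ {H' | FU.equiv H' (U (m + 1))} := by
      rw [← hnm]; exact U_equiv_self (n + 1)
    obtain ⟨hle1, hle2⟩ := h1
    have d1 : (m + 1) ∣ (n + 1) := U_le_dvd hle1
    have d2 : (n + 1) ∣ (m + 1) := U_le_dvd hle2
    have := Nat.dvd_antisymm d1 d2
    omega
  · intro n
    exact ⟨⟨U (n + 1), rfl⟩, U (n + 1), U_equiv_self (n + 1), U_le_RC (n + 1)⟩
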